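/- Reduction of SAT to continuous optimization (unweighted): let c_1,…,c_m be Boolean functions on n variables and let F_f(x) = Σ_{j=1}^m WFE_{c_j}(x). Then F_f(x) ≤ m for all x ∈ [−1,1]^n, and the formula f = c_1 ∧ … ∧ c_m is satisfiable if and only if there exists a ∈ [−1,1]^n with F_f(a) = m (i.e., the maximum of F_f over [−1,1]^n equals m). -/

import Mathlib

open Finset

/-- Map a Bool vector to a ±1 real vector: `true` (logical True) ↦ -1, `false` ↦ 1. -/
noncomputable def toPM {n : ℕ} (b : Fin n → Bool) : Fin n → ℝ :=
  fun i => if b i then -1 else 1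

/-- Walsh–Fourier coefficient ĝ(S) = 2^{-n} · Σ_{b∈{-1,1}^n} g(b) · ∏_{i∈S} b_i. -/
noncomputable def wfCoeff {n : ℕ} (g : (Fin n → Bool) → ℝ) (S : Finset (Fin n)) : ℝ :=
  (2 ^ n : ℝ)⁻¹ * ∑ b : Fin n → Bool, g b * ∏ i ∈ S, toPM b i

/-- Walsh–Fourier expansion (multilinear extension) of g. -/
noncomputable def WFE {n : ℕ} (g : (Fin n → Bool) → ℝ) (x : Fin n → ℝ) : ℝ :=
  ∑ S : Finset (Fin n), wfCoeff g S * ∏ i ∈ S, x i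

/-- Real {0,1} value of a Boolean function (1 = True). -/
noncomputable def bval {n : ℕ} (c : (Fin n → Bool) → Bool) : (Fin n → Bool) → ℝ :=
  fun b => if c b then 1 else 0

/-- Rounding distribution S_a(b) = ∏_{b_i = -1} (1-a_i)/2 · ∏_{b_i = +1} (1+a_i)/2. -/
noncomputable def roundProb {n : ℕ} (a : Fin n → ℝ) (b : Fin n → Bool) : ℝ :=
  ∏ i, if b i then (1 - a i) / 2 else (1 + a i) / 2

/-- Circuit-output probability COP(P,c). -/
noncomputable def COP {n : ℕ} (P : Fin n → ℝ) (c : (Fin n → Bool) → Bool) : ℝ :=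
  ∑ b : Fin n → Bool, bval c b * ∏ i, (if b i then P i else 1 - P i)

lemma sum_prod_subset' {n : ℕ} (f : Fin n → ℝ) :
    ∑ S : Finset (Fin n), ∏ i ∈ S, f i = ∏ i, (f i + 1) := by
  rw [Finset.prod_add]
  simp [Finset.powerset_univ]

lemma prod_key {n : ℕ} (b : Fin n → Bool) (x : Fin n → ℝ) :
    ∏ i, (toPM b i * x i + 1) = 2 ^ n * roundProb x b := by
  unfold toPM roundProb
  have h : ∀ i : Fin n, ((if b i then (-1:ℝ) else 1) * x i + 1)
      = 2 * (if b i then (1 - x i)/2 else (1 + x i)/2) := by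
    intro i; by_cases hb : b i <;> simp [hb] <;> ring
  rw [Finset.prod_congr rfl (fun i _ => h i), Finset.prod_mul_distrib,
    Finset.prod_const, Finset.card_univ, Fintype.card_fin]

lemma WFE_eq {n : ℕ} (g : (Fin n → Bool) → ℝ) (x : Fin n → ℝ) :
    WFE g x = ∑ b : Fin n → Bool, g b * roundProb x b := by
  unfold WFE wfCoeff
  have step1 : ∀ S : Finset (Fin n),
      ((2 ^ n : ℝ)⁻¹ * ∑ b : Fin n → Bool, g b * ∏ i ∈ S, toPM b i) * ∏ i ∈ S, x i
      = ∑ b : Fin n → Bool, (2 ^ n : ℝ)⁻¹ * (g b * ∏ i ∈ S, (toPM b i * x i)) := by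
    intro S
    rw [mul_assoc, Finset.sum_mul, Finset.mul_sum]
    refine Finset.sum_congr rfl fun b _ => ?_
    rw [Finset.prod_mul_distrib]; ring
  rw [Finset.sum_congr rfl (fun S _ => step1 S), Finset.sum_comm]
  refine Finset.sum_congr rfl fun b _ => ?_
  rw [← Finset.mul_sum, ← Finset.mul_sum, sum_prod_subset', prod_key]
  have h2 : (2 : ℝ) ^ n ≠ 0 := by positivity
  field_simp

lemma sum_roundProb {n : ℕ} (x : Fin n → ℝ) :
    ∑ b : Fin n → Bool, roundProb x b = 1 := by
  unfold roundProb
  have key := Finset.prod_univ_sum (t := fun _ : Fin n => (Finset.univ : Finset Bool))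
      (f := fun i j => if j then (1 - x i)/2 else (1 + x i)/2)
  rw [← Fintype.piFinset_univ, ← key]
  have h : ∀ i : Fin n,
      (∑ j ∈ (Finset.univ : Finset Bool), if j then (1 - x i)/2 else (1 + x i)/2) = 1 := by
    intro i
    rw [Fintype.sum_bool]
    simp; ring
  rw [Finset.prod_congr rfl (fun i _ => h i), Finset.prod_const_one]

lemma roundProb_nonneg {n : ℕ} (x : Fin n → ℝ) (hx : ∀ i, x i ∈ Set.Icc (-1:ℝ) 1)
    (b : Fin n → Bool) : 0 ≤ roundProb x b := by
  unfold roundProb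
  apply Finset.prod_nonneg
  intro i _
  rcases hx i with ⟨h1, h2⟩
  by_cases h : b i <;> simp [h] <;> linarith

lemma WFE_le_one {n : ℕ} (c : (Fin n → Bool) → Bool) (x : Fin n → ℝ)
    (hx : ∀ i, x i ∈ Set.Icc (-1:ℝ) 1) : WFE (bval c) x ≤ 1 := by
  rw [WFE_eq, ← sum_roundProb x]
  apply Finset.sum_le_sum
  intro b _
  have hp := roundProb_nonneg x hx b
  unfold bval
  by_cases h : c b <;> simp [h] <;> linarith

lemma roundProb_toPM {n : ℕ} (b b' : Fin n → Bool) :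
    roundProb (toPM b) b' = if b' = b then 1 else 0 := by
  unfold roundProb toPM
  by_cases h : b' = b
  · subst h
    simp only [if_pos rfl]
    apply Finset.prod_eq_one
    intro i _
    by_cases hi : b' i <;> simp [hi] <;> norm_num
  · rw [if_neg h]
    obtain ⟨i, hi⟩ : ∃ i, b' i ≠ b i := by
      by_contra hc; push_neg at hc; exact h (funext hc)
    apply Finset.prod_eq_zero (Finset.mem_univ i)
    cases hb' : b' i <;> cases hb : b i <;> simp [hb', hb] at hi ⊢ <;> norm_num

lemma WFE_toPM {n : ℕ} (c : (Fin n → Bool) → Bool) (b : Fin n → Bool) :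
    WFE (bval c) (toPM b) = bval c b := by
  rw [WFE_eq]
  simp [roundProb_toPM, mul_ite]

/-- Reduction of SAT to continuous optimization (unweighted). -/
theorem sat_iff_max_unweighted {n m : ℕ} (c : Fin m → (Fin n → Bool) → Bool) :
    (∀ x : Fin n → ℝ, (∀ i, x i ∈ Set.Icc (-1 : ℝ) 1) →
      ∑ j, WFE (bval (c j)) x ≤ (m : ℝ)) ∧
    ((∃ b : Fin n → Bool, ∀ j, c j b = true) ↔
      ∃ a : Fin n → ℝ, (∀ i, a i ∈ Set.Icc (-1 : ℝ) 1) ∧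
        ∑ j, WFE (bval (c j)) a = (m : ℝ)) := by
  have hbound : ∀ x : Fin n → ℝ, (∀ i, x i ∈ Set.Icc (-1 : ℝ) 1) →
      ∑ j, WFE (bval (c j)) x ≤ (m : ℝ) := by
    intro x hx
    calc ∑ j, WFE (bval (c j)) x ≤ ∑ _j : Fin m, (1:ℝ) :=
          Finset.sum_le_sum (fun j _ => WFE_le_one (c j) x hx)
      _ = (m : ℝ) := by simp
  refine ⟨hbound, ?_, ?_⟩
  · rintro ⟨b, hb⟩
    refine ⟨toPM b, ?_, ?_⟩
    · intro i
      unfold toPM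
      by_cases h : b i <;> simp [h] <;> norm_num
    · calc ∑ j, WFE (bval (c j)) (toPM b) = ∑ _j : Fin m, (1:ℝ) := by
            refine Finset.sum_congr rfl fun j _ => ?_
            rw [WFE_toPM]; unfold bval; rw [hb j]; simp
        _ = (m : ℝ) := by simp
  · rintro ⟨a, ha, hsum⟩
    have hall : ∀ j, WFE (bval (c j)) a = 1 := by
      by_contra hcon
      push_neg at hcon
      obtain ⟨j0, hj0⟩ := hcon
      have hlt : ∑ j, WFE (bval (c j)) a < ∑ _j : Fin m, (1:ℝ) :=
        Finset.sum_lt_sum (fun j _ => WFE_le_one (c j) a ha)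
          ⟨j0, Finset.mem_univ j0, lt_of_le_of_ne (WFE_le_one (c j0) a ha) hj0⟩
      simp only [Finset.sum_const, Finset.card_univ, Fintype.card_fin, nsmul_eq_mul,
        mul_one] at hlt
      rw [hsum] at hlt
      exact lt_irrefl _ hlt
    set b : Fin n → Bool := fun i => decide (a i < 1) with hbdef
    have hpos : 0 < roundProb a b := by
      unfold roundProb
      apply Finset.prod_pos
      intro i _
      rcases ha i with ⟨h1, h2⟩
      by_cases h : a i < 1
      · have hb : b i = true := by simp [hbdef, h]
        rw [hb, if_pos rfl]; linarith
      · have hb : b i = false := by simp [hbdef]; linarith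
        rw [hb]; simp; linarith
    refine ⟨b, fun j => ?_⟩
    have h0 : ∑ b' : Fin n → Bool, (1 - bval (c j) b') * roundProb a b' = 0 := by
      have h1 := hall j
      rw [WFE_eq] at h1
      have h2 := sum_roundProb a
      simp only [sub_mul, one_mul]
      rw [Finset.sum_sub_distrib, h1, h2, sub_self]
    have hterm : (1 - bval (c j) b) * roundProb a b = 0 := by
      have hnn : ∀ b' ∈ (Finset.univ : Finset (Fin n → Bool)),
          0 ≤ (1 - bval (c j) b') * roundProb a b' := by
        intro b' _
        apply mul_nonneg _ (roundProb_nonneg a ha b')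
        unfold bval
        by_cases h : c j b' <;> simp [h]
      exact (Finset.sum_eq_zero_iff_of_nonneg hnn).mp h0 b (Finset.mem_univ b)
    by_contra hc
    have hc' : bval (c j) b = 0 := by
      unfold bval; simp [hc]
    rw [hc'] at hterm
    have hz : roundProb a b = 0 := by linear_combination hterm
    exact absurd hz (ne_of_gt hpos)
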